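/- Let C be a covering of U, let D₁, D₂ be definable sets with respect to C, and let d ∈ D₂ − D₁. Then D₁ ∪ {d} is not a definable set with respect to C if and only if there exists e ∈ D₂ − D₁ with e ≠ d and e ∈ N_C(d). -/
import Mathlib


variable {α : Type*}

/-- `C` is a covering of `U`: every member is nonempty and their union is `U`. -/
def IsCovering (U : Set α) (C : Set (Set α)) : Prop :=
  (∀ K ∈ C, K.Nonempty) ∧ ⋃₀ C = U

/-- The neighborhood of `x`: intersection of all members of `C` containing `x`. -/
def nbhd (C : Set (Set α)) (x : α) : Set α :=
  ⋂₀ {K | K ∈ C ∧ x ∈ K}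

/-- `X` is definable w.r.t. `C` if it is the union of the neighborhoods of its points. -/
def Definable (C : Set (Set α)) (X : Set α) : Prop :=
  X = ⋃ x ∈ X, nbhd C x

/-- The family of all definable subsets of `U` w.r.t. `C`. -/
def DefinableSets (U : Set α) (C : Set (Set α)) : Set (Set α) :=
  {X | X ⊆ U ∧ Definable C X}

/-- Covering-based lower approximation. -/
def lowerApprox (U : Set α) (C : Set (Set α)) (X : Set α) : Set α :=
  {x ∈ U | nbhd C x ⊆ X}

/-- Covering-based upper approximation. -/
def upperApprox (U : Set α) (C : Set (Set α)) (X : Set α) : Set α :=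
  {x ∈ U | (nbhd C x ∩ X).Nonempty}

/-- Rough matroid based on a covering `C` of `U`. -/
def RoughMatroid (U : Set α) (C : Set (Set α)) (I : Set (Set α)) : Prop :=
  I ⊆ DefinableSets U C ∧
  ∅ ∈ I ∧
  (∀ I₀ ∈ I, ∀ I', I' ⊆ I₀ → I' ∈ DefinableSets U C → I' ∈ I) ∧
  (∀ I₁ ∈ I, ∀ I₂ ∈ I, I₁.ncard < I₂.ncard →
    ∃ I₀ ∈ I, I₁ ⊂ I₀ ∧ I₀ ⊆ I₁ ∪ I₂)

/-- Matroid independence axioms (I1)-(I3). -/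
def MatroidInd (I : Set (Set α)) : Prop :=
  ∅ ∈ I ∧
  (∀ X ∈ I, ∀ Y, Y ⊆ X → Y ∈ I) ∧
  (∀ I₁ ∈ I, ∀ I₂ ∈ I, I₁.ncard < I₂.ncard →
    ∃ e ∈ I₂ \ I₁, insert e I₁ ∈ I)


lemma mem_nbhd_self (C : Set (Set α)) (x : α) : x ∈ nbhd C x :=
  fun _ hK => hK.2

lemma nbhd_subset_of_definable {C : Set (Set α)} {X : Set α}
    (h : Definable C X) {x : α} (hx : x ∈ X) : nbhd C x ⊆ X := by
  rw [h]; exact Set.subset_biUnion_of_mem hx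

theorem insert_not_definable_iff {U : Set α} {C : Set (Set α)} (hU : U.Finite)
    (hC : IsCovering U C) {D₁ D₂ : Set α}
    (hD₁ : D₁ ∈ DefinableSets U C) (hD₂ : D₂ ∈ DefinableSets U C)
    {d : α} (hd : d ∈ D₂ \ D₁) :
    insert d D₁ ∉ DefinableSets U C ↔
      ∃ e ∈ D₂ \ D₁, e ≠ d ∧ e ∈ nbhd C d := by
  constructor
  · intro hnd
    by_contra hne
    push_neg at hne
    apply hnd
    refine ⟨Set.insert_subset (hD₂.1 hd.1) hD₁.1, ?_⟩
    apply Set.Subset.antisymm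
    · intro x hx
      exact Set.mem_biUnion hx (mem_nbhd_self C x)
    · intro y hy
      simp only [Set.mem_iUnion, exists_prop] at hy
      obtain ⟨x, hx, hyx⟩ := hy
      rcases hx with rfl | hx
      · by_cases hy1 : y ∈ D₁
        · exact Set.mem_insert_of_mem _ hy1
        · by_cases hyd : y = x
          · exact hyd ▸ Set.mem_insert _ _
          · exact absurd hyx (hne y ⟨nbhd_subset_of_definable hD₂.2 hd.1 hyx, hy1⟩ hyd)
      · exact Set.mem_insert_of_mem _ (nbhd_subset_of_definable hD₁.2 hx hyx)
  · rintro ⟨e, ⟨he2, he1⟩, hed, hend⟩ hdef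
    have : e ∈ insert d D₁ :=
      nbhd_subset_of_definable hdef.2 (Set.mem_insert _ _) hend
    rcases this with rfl | h
    · exact hed rfl
    · exact he1 h
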